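/- Let N ≥ 1 and let g : ℝ^N → ℝ be a C¹ function that is ℤ^N-periodic (g(x + k) = g(x) for all k ∈ ℤ^N) and has 0 as a regular value, i.e. there is no x with g(x) = 0 and ∇g(x) = 0 simultaneously. Then there exist constants Ĉ > 0 and ε̂ > 0 such that for every 0 < ε ≤ ε̂, the Lebesgue measure of the set {x ∈ [0,1]^N : |g(x)| ≤ ε} is at most Ĉ·ε. -/

import Mathlib

open MeasureTheory


-- coordinate selection lemma
lemma exists_coord (n : ℕ) (ℓ : (Fin (n+1) → ℝ) →L[ℝ] ℝ) :
    ∃ i, ‖ℓ‖ ≤ (n+1) * |ℓ (Pi.single i 1)| := by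
  obtain ⟨i, -, hi⟩ := Finset.exists_max_image (Finset.univ : Finset (Fin (n+1)))
    (fun i => |ℓ (Pi.single i 1)|) ⟨0, Finset.mem_univ 0⟩
  refine ⟨i, ?_⟩
  have h1 : ‖ℓ‖ ≤ ∑ j, |ℓ (Pi.single j 1)| := by
    refine ℓ.opNorm_le_bound (Finset.sum_nonneg fun j _ => abs_nonneg _) fun x => ?_
    have hx : x = ∑ j, Pi.single j (x j) := (Finset.univ_sum_single x).symm
    calc ‖ℓ x‖ = |∑ j, ℓ (Pi.single j (x j))| := by rw [← map_sum]; rw [← hx]; rfl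
    _ ≤ ∑ j, |ℓ (Pi.single j (x j))| := Finset.abs_sum_le_sum_abs _ _
    _ ≤ ∑ j, |ℓ (Pi.single j 1)| * ‖x‖ := by
        refine Finset.sum_le_sum fun j _ => ?_
        have : Pi.single j (x j) = x j • (Pi.single j 1 : Fin (n+1) → ℝ) := by
          rw [← Pi.single_smul, smul_eq_mul, mul_one]
        rw [this, _root_.map_smul, smul_eq_mul, abs_mul, mul_comm]
        exact mul_le_mul_of_nonneg_left (norm_le_pi_norm x j) (abs_nonneg _)
    _ = (∑ j, |ℓ (Pi.single j 1)|) * ‖x‖ := (Finset.sum_mul _ _ _).symm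
  refine h1.trans ?_
  calc ∑ j, |ℓ (Pi.single j 1)| ≤ Finset.univ.card • |ℓ (Pi.single i 1)| :=
        Finset.sum_le_card_nsmul _ _ _ fun j _ => hi j (Finset.mem_univ j)
  _ = (n+1) * |ℓ (Pi.single i 1)| := by
        simp [Finset.card_univ, nsmul_eq_mul]
open MeasureTheory

lemma line_eq (n : ℕ) (i : Fin (n+1)) (y : Fin n → ℝ) (t : ℝ) :
    i.insertNth t y = i.insertNth 0 y + t • (Pi.single i 1 : Fin (n+1) → ℝ) := by
  funext j
  by_cases h : j = i
  · subst h; simp [Fin.insertNth_apply_same]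
  · obtain ⟨k, rfl⟩ := Fin.exists_succAbove_eq h
    simp [Fin.insertNth_apply_succAbove, Pi.single_eq_of_ne (Fin.succAbove_ne i k)]

lemma key1 (n : ℕ) (g : (Fin (n+1) → ℝ) → ℝ) (hg : ContDiff ℝ 1 g)
    {B : Set (Fin (n+1) → ℝ)} (hB : Convex ℝ B) (i : Fin (n+1)) {c : ℝ}
    (hc : ∀ x ∈ B, c ≤ fderiv ℝ g x (Pi.single i 1)) (y : Fin n → ℝ) {t t' : ℝ}
    (ht : i.insertNth t y ∈ B) (ht' : i.insertNth t' y ∈ B) (htt : t ≤ t') :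
    c * (t' - t) ≤ g (i.insertNth t' y) - g (i.insertNth t y) := by
  set a : Fin (n+1) → ℝ := i.insertNth 0 y with ha
  set v : Fin (n+1) → ℝ := Pi.single i 1 with hv
  set L : ℝ → (Fin (n+1) → ℝ) := fun s => a + s • v with hL
  have hline : ∀ s, i.insertNth s y = L s := fun s => line_eq n i y s
  have hLderiv : ∀ s : ℝ, HasDerivAt L v s := by
    intro s
    exact (((hasDerivAt_id s).smul_const v).const_add a).congr_deriv (one_smul ℝ v)
  have hu : ∀ s : ℝ, HasDerivAt (fun s => g (L s)) (fderiv ℝ g (L s) v) s := by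
    intro s
    exact ((hg.differentiable one_ne_zero (L s)).hasFDerivAt).comp_hasDerivAt s (hLderiv s)
  set D : Set ℝ := L ⁻¹' B with hD
  have hDconv : Convex ℝ D := by
    intro p hp q hq α β hα hβ hαβ
    have : L (α • p + β • q) = α • L p + β • L q := by
      simp only [hL, smul_eq_mul]
      funext j
      simp only [Pi.add_apply, Pi.smul_apply, smul_eq_mul]
      have : α * a j + β * a j = a j := by rw [← add_mul, hαβ, one_mul]
      ring_nf
      nlinarith [this]
    simp only [Set.mem_preimage, D]
    rw [this]
    exact hB hp hq hα hβ hαβ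
  have := hDconv.mul_sub_le_image_sub_of_le_deriv
    (f := fun s => g (L s))
    (fun s _ => (hu s).continuousAt.continuousWithinAt)
    (fun s _ => ((hu s).differentiableAt).differentiableWithinAt)
    (C := c)
    (fun s hs => by
      rw [(hu s).deriv]
      have hsD : s ∈ D := interior_subset hs
      exact hc (L s) hsD)
    t (by rwa [hD, Set.mem_preimage, ← hline]) t' (by rwa [hD, Set.mem_preimage, ← hline]) htt
  rw [hline t, hline t']
  exact this

lemma key2 (n : ℕ) (g : (Fin (n+1) → ℝ) → ℝ) (hg : ContDiff ℝ 1 g)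
    {B : Set (Fin (n+1) → ℝ)} (hB : Convex ℝ B) (i : Fin (n+1)) {c : ℝ} (hcpos : 0 < c)
    (hsign : (∀ x ∈ B, c ≤ fderiv ℝ g x (Pi.single i 1)) ∨
             (∀ x ∈ B, fderiv ℝ g x (Pi.single i 1) ≤ -c))
    {ε : ℝ} (y : Fin n → ℝ) {t t' : ℝ}
    (ht : i.insertNth t y ∈ B) (hgt : |g (i.insertNth t y)| ≤ ε)
    (ht' : i.insertNth t' y ∈ B) (hgt' : |g (i.insertNth t' y)| ≤ ε) :
    dist t t' ≤ 2 * ε / c := by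
  have habs : ∀ s s' : ℝ, s ≤ s' → i.insertNth s y ∈ B → i.insertNth s' y ∈ B →
      |g (i.insertNth s y)| ≤ ε → |g (i.insertNth s' y)| ≤ ε → s' - s ≤ 2 * ε / c := by
    intro s s' hss hs hs' hgs hgs'
    have key : c * (s' - s) ≤ 2 * ε := by
      rcases hsign with h | h
      · have hk := key1 n g hg hB i h y hs hs' hss
        have h1 := abs_le.mp hgs
        have h2 := abs_le.mp hgs'
        linarith
      · have hneg : ∀ x ∈ B, c ≤ fderiv ℝ (fun x => -g x) x (Pi.single i 1) := by
          intro x hx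
          rw [fderiv_fun_neg]
          simp only [ContinuousLinearMap.neg_apply]
          linarith [h x hx]
        have hk := key1 n (fun x => -g x) hg.neg hB i hneg y hs hs' hss
        have h1 := abs_le.mp hgs
        have h2 := abs_le.mp hgs'
        linarith
    rw [le_div_iff₀ hcpos]
    nlinarith
  rcases le_total t t' with h | h
  · rw [Real.dist_eq, abs_of_nonpos (by linarith), neg_sub]
    exact habs t t' h ht ht' hgt hgt'
  · rw [Real.dist_eq, abs_of_nonneg (by linarith)]
    exact habs t' t h ht' ht hgt' hgt

lemma key3 (n : ℕ) (g : (Fin (n+1) → ℝ) → ℝ) (hg : ContDiff ℝ 1 g)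
    (i : Fin (n+1)) (x₀ : Fin (n+1) → ℝ) {r c : ℝ} (hr : 0 < r) (hcpos : 0 < c)
    (hsign : (∀ x ∈ Metric.closedBall x₀ r, c ≤ fderiv ℝ g x (Pi.single i 1)) ∨
             (∀ x ∈ Metric.closedBall x₀ r, fderiv ℝ g x (Pi.single i 1) ≤ -c))
    {ε : ℝ} (hε : 0 < ε) :
    volume {x | x ∈ Metric.closedBall x₀ r ∧ |g x| ≤ ε} ≤
      ENNReal.ofReal (2 * ε / c) * ENNReal.ofReal ((2 * r) ^ n) := by
  set B := Metric.closedBall x₀ r with hB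
  set A : Set (Fin (n+1) → ℝ) := {x | x ∈ B ∧ |g x| ≤ ε} with hA
  have hAclosed : IsClosed A := by
    have h1 : IsClosed {x : Fin (n+1) → ℝ | |g x| ≤ ε} :=
      isClosed_le (continuous_abs.comp hg.continuous) continuous_const
    exact Metric.isClosed_closedBall.inter h1
  have hAmeas : MeasurableSet A := hAclosed.measurableSet
  set e := MeasurableEquiv.piFinSuccAbove (fun _ : Fin (n+1) => ℝ) i with he
  set s : Set (ℝ × (Fin n → ℝ)) := e.symm ⁻¹' A with hs
  have hsmeas : MeasurableSet s := e.symm.measurable hAmeas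
  have hee : e ⁻¹' s = A := by
    ext x; simp [hs]
  have hvol : volume A =
      (volume : Measure ℝ).prod (volume : Measure (Fin n → ℝ)) s := by
    rw [← hee]
    rw [(volume_preserving_piFinSuccAbove (fun _ : Fin (n+1) => ℝ) i).measure_preimage
      hsmeas.nullMeasurableSet]
    rw [← Measure.volume_eq_prod]
  rw [hvol, Measure.prod_apply_symm hsmeas]
  -- slice bound
  set Q : Set (Fin n → ℝ) :=
    Set.pi Set.univ (fun j => Set.Icc (x₀ (i.succAbove j) - r) (x₀ (i.succAbove j) + r)) with hQ
  have hQmeas : MeasurableSet Q := MeasurableSet.univ_pi fun j => measurableSet_Icc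
  have hslice : ∀ y : Fin n → ℝ,
      volume ((fun t => (t, y)) ⁻¹' s) ≤
        Q.indicator (fun _ => ENNReal.ofReal (2 * ε / c)) y := by
    intro y
    by_cases hne : ((fun t => (t, y)) ⁻¹' s).Nonempty
    · obtain ⟨t₀, ht₀⟩ := hne
      have hins : ∀ t ∈ (fun t => (t, y)) ⁻¹' s, i.insertNth t y ∈ A := by
        intro t htm
        have : e.symm (t, y) ∈ A := htm
        simpa [he, MeasurableEquiv.piFinSuccAbove_symm_apply, Fin.insertNthEquiv, Equiv.coe_fn_mk] using this
      have hyQ : y ∈ Q := by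
        have hball := (hins t₀ ht₀).1
        rw [hB, Metric.mem_closedBall] at hball
        intro j _
        have := (dist_pi_le_iff hr.le).mp hball (i.succAbove j)
        rw [Fin.insertNth_apply_succAbove, Real.dist_eq, abs_le] at this
        constructor <;> linarith [this.1, this.2]
      rw [Set.indicator_of_mem hyQ]
      refine (Real.volume_le_diam _).trans ?_
      refine EMetric.diam_le fun t htm t' htm' => ?_
      rw [edist_dist]
      refine ENNReal.ofReal_le_ofReal ?_
      have h1 := hins t htm
      have h2 := hins t' htm'
      exact key2 n g hg (convex_closedBall x₀ r) i hcpos hsign y h1.1 h1.2 h2.1 h2.2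
    · rw [Set.not_nonempty_iff_eq_empty.mp hne]
      simp
  calc ∫⁻ y, volume ((fun t => (t, y)) ⁻¹' s) ∂volume
      ≤ ∫⁻ y, Q.indicator (fun _ => ENNReal.ofReal (2 * ε / c)) y ∂volume :=
        lintegral_mono hslice
  _ = ENNReal.ofReal (2 * ε / c) * volume Q := by
        rw [lintegral_indicator hQmeas]; simp [mul_comm]
  _ ≤ ENNReal.ofReal (2 * ε / c) * ENNReal.ofReal ((2 * r) ^ n) := by
        gcongr
        have : volume Q = ∏ j : Fin n, ENNReal.ofReal (2 * r) := by
          rw [hQ, volume_pi_pi]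
          congr 1; funext j; rw [Real.volume_Icc]; ring_nf
        rw [this, Finset.prod_const, ← ENNReal.ofReal_pow (by linarith)]
        simp

/-- If `g : ℝ^N → ℝ` is `C¹`, `ℤ^N`-periodic, and has `0` as a regular
value (no `x` with `g x = 0` and `∇g x = 0`), then there are `Ĉ > 0` and `ε̂ > 0` such that
for every `0 < ε ≤ ε̂`, `Leb{x ∈ [0,1]^N : |g x| ≤ ε} ≤ Ĉ ε`. -/
theorem statement9 (N : ℕ) (hN : 1 ≤ N) (g : (Fin N → ℝ) → ℝ)
    (hg : ContDiff ℝ 1 g)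
    (hper : ∀ (x : Fin N → ℝ) (k : Fin N → ℤ), g (x + fun i => (k i : ℝ)) = g x)
    (hreg : ∀ x : Fin N → ℝ, g x = 0 → fderiv ℝ g x ≠ 0) :
    ∃ C : ℝ, 0 < C ∧ ∃ ε₀ : ℝ, 0 < ε₀ ∧ ∀ ε : ℝ, 0 < ε → ε ≤ ε₀ →
      volume {x : Fin N → ℝ | (∀ i, x i ∈ Set.Icc (0 : ℝ) 1) ∧ |g x| ≤ ε} ≤
        ENNReal.ofReal (C * ε) := by
  obtain ⟨n, rfl⟩ : ∃ n, N = n + 1 := ⟨N - 1, (Nat.succ_pred_eq_of_pos hN).symm⟩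
  clear hper hN
  set K : Set (Fin (n+1) → ℝ) := Set.pi Set.univ (fun _ => Set.Icc (0:ℝ) 1) with hK
  have hKcomp : IsCompact K := isCompact_univ_pi fun _ => isCompact_Icc
  have hKne : K.Nonempty := ⟨fun _ => 0, fun i _ => Set.mem_Icc.mpr ⟨le_refl 0, zero_le_one⟩⟩
  set φ : (Fin (n+1) → ℝ) → ℝ := fun x => max |g x| ‖fderiv ℝ g x‖ with hφ
  have hφcont : Continuous φ :=
    Continuous.max (continuous_abs.comp hg.continuous) (hg.continuous_fderiv one_ne_zero).norm
  obtain ⟨z, hzK, hzmin'⟩ := hKcomp.exists_isMinOn hKne hφcont.continuousOn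
  have hzmin : ∀ x ∈ K, φ z ≤ φ x := fun x hx => isMinOn_iff.mp hzmin' x hx
  set m : ℝ := φ z with hm
  have hmpos : 0 < m := by
    rcases eq_or_ne (g z) 0 with h0 | h0
    · have : fderiv ℝ g z ≠ 0 := hreg z h0
      have : 0 < ‖fderiv ℝ g z‖ := norm_pos_iff.mpr this
      exact lt_of_lt_of_le this (le_max_right _ _)
    · have : 0 < |g z| := abs_pos.mpr h0
      exact lt_of_lt_of_le this (le_max_left _ _)
  set c : ℝ := m / (2 * (n + 1)) with hc
  have hcpos : 0 < c := by
    apply div_pos hmpos; positivity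
  set ψ : Fin (n+1) → (Fin (n+1) → ℝ) → ℝ :=
    fun i x => fderiv ℝ g x (Pi.single i 1) with hψ
  have hψcont : ∀ i, Continuous (ψ i) := fun i =>
    (hg.continuous_fderiv one_ne_zero).clm_apply continuous_const
  have H : ∀ x₀ : Fin (n+1) → ℝ, ∃ (i : Fin (n+1)) (r : ℝ), 0 < r ∧
      ((x₀ ∈ K ∧ |g x₀| ≤ m / 2) →
        ((∀ x ∈ Metric.closedBall x₀ r, c ≤ ψ i x) ∨
         (∀ x ∈ Metric.closedBall x₀ r, ψ i x ≤ -c))) := by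
    intro x₀
    by_cases hx₀ : x₀ ∈ K ∧ |g x₀| ≤ m / 2
    swap
    · exact ⟨0, 1, one_pos, fun h => absurd h hx₀⟩
    have hφx₀ : m ≤ φ x₀ := hzmin x₀ hx₀.1
    have hDnorm : m ≤ ‖fderiv ℝ g x₀‖ := by
      rcases le_max_iff.mp hφx₀ with h | h
      · linarith [hx₀.2]
      · exact h
    obtain ⟨i, hi⟩ := exists_coord n (fderiv ℝ g x₀)
    have hψbig : 2 * c ≤ |ψ i x₀| := by
      have hn1 : (0:ℝ) < n + 1 := by positivity
      have hmψ : m ≤ (n+1) * |ψ i x₀| := le_trans hDnorm hi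
      calc 2 * c = m / ((n:ℝ)+1) := by rw [hc]; field_simp
      _ ≤ |ψ i x₀| := by rw [div_le_iff₀ hn1]; linarith
    obtain ⟨δ, hδpos, hδ⟩ := Metric.continuousAt_iff.mp (hψcont i).continuousAt c hcpos
    refine ⟨i, δ / 2, by positivity, fun _ => ?_⟩
    have hball : ∀ x ∈ Metric.closedBall x₀ (δ / 2), |ψ i x - ψ i x₀| < c := by
      intro x hx
      rw [Metric.mem_closedBall] at hx
      have := hδ (show dist x x₀ < δ by linarith)
      rwa [Real.dist_eq] at this
    rcases le_or_gt 0 (ψ i x₀) with hpos | hneg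
    · left
      intro x hx
      have h1 := hball x hx
      rw [abs_of_nonneg hpos] at hψbig
      have := abs_lt.mp h1
      linarith [this.1]
    · right
      intro x hx
      have h1 := hball x hx
      rw [abs_of_nonpos hneg.le] at hψbig
      have := abs_lt.mp h1
      linarith [this.2]
  choose I R hRpos hprop using H
  set T : Set (Fin (n+1) → ℝ) := K ∩ {x | |g x| ≤ m / 2} with hT
  have hTcomp : IsCompact T :=
    hKcomp.inter_right (isClosed_le (continuous_abs.comp hg.continuous) continuous_const)
  obtain ⟨t, htT, hcover⟩ := hTcomp.elim_nhds_subcover (fun x => Metric.ball x (R x))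
    (fun x _ => Metric.ball_mem_nhds x (hRpos x))
  have hterm : ∀ x₀, (0:ℝ) ≤ (2 / c) * (2 * R x₀) ^ n := fun x₀ =>
    mul_nonneg (div_nonneg (by norm_num) hcpos.le) (pow_nonneg (by linarith [hRpos x₀]) n)
  refine ⟨1 + ∑ x₀ ∈ t, (2 / c) * (2 * R x₀) ^ n, ?_, m / 2, by positivity, ?_⟩
  · have : (0:ℝ) ≤ ∑ x₀ ∈ t, (2 / c) * (2 * R x₀) ^ n :=
      Finset.sum_nonneg fun x₀ _ => hterm x₀
    linarith
  intro ε hε hεm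
  set S : Set (Fin (n+1) → ℝ) := {x | (∀ i, x i ∈ Set.Icc (0:ℝ) 1) ∧ |g x| ≤ ε} with hS
  have hsub : S ⊆ ⋃ x₀ ∈ t, {x | x ∈ Metric.closedBall x₀ (R x₀) ∧ |g x| ≤ ε} := by
    intro x hx
    have hxT : x ∈ T := ⟨fun i _ => hx.1 i, le_trans hx.2 hεm⟩
    obtain ⟨x₀, hx₀t, hxball⟩ := Set.mem_iUnion₂.mp (hcover hxT)
    exact Set.mem_iUnion₂.mpr ⟨x₀, hx₀t,
      ⟨Metric.ball_subset_closedBall hxball, hx.2⟩⟩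
  calc volume S ≤ ∑ x₀ ∈ t, volume {x | x ∈ Metric.closedBall x₀ (R x₀) ∧ |g x| ≤ ε} :=
        le_trans (measure_mono hsub) (measure_biUnion_finset_le _ _)
  _ ≤ ∑ x₀ ∈ t, ENNReal.ofReal (2 * ε / c) * ENNReal.ofReal ((2 * R x₀) ^ n) := by
        refine Finset.sum_le_sum fun x₀ hx₀ => ?_
        have hsign := hprop x₀ ⟨(htT x₀ hx₀).1, (htT x₀ hx₀).2⟩
        exact key3 n g hg (I x₀) x₀ (hRpos x₀) hcpos hsign hε
  _ = ∑ x₀ ∈ t, ENNReal.ofReal (ε * ((2 / c) * (2 * R x₀) ^ n)) := by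
        refine Finset.sum_congr rfl fun x₀ _ => ?_
        rw [← ENNReal.ofReal_mul (div_nonneg (by linarith) hcpos.le)]
        congr 1
        field_simp
  _ ≤ ENNReal.ofReal ((1 + ∑ x₀ ∈ t, (2 / c) * (2 * R x₀) ^ n) * ε) := by
        rw [← ENNReal.ofReal_sum_of_nonneg (fun x₀ _ => mul_nonneg hε.le (hterm x₀))]
        refine ENNReal.ofReal_le_ofReal ?_
        rw [← Finset.mul_sum]
        have hsum : (0:ℝ) ≤ ∑ x₀ ∈ t, (2 / c) * (2 * R x₀) ^ n :=
          Finset.sum_nonneg fun x₀ _ => hterm x₀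
        nlinarith
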